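/- Let G be a finite group and let v ≠ e be a dominating vertex of the enhanced power graph of G whose order is divisible by a prime p. Then every element of order p in G lies in the cyclic subgroup of order p contained in ⟨v⟩. -/

import Mathlib

/-- The enhanced power graph of a group `G`: vertices are elements of `G`,
with distinct `u`, `v` adjacent iff both are powers of a common element. -/
def enhancedPowerGraph (G : Type*) [Group G] : SimpleGraph G where
  Adj u v := u ≠ v ∧ ∃ w : G, u ∈ Subgroup.zpowers w ∧ v ∈ Subgroup.zpowers w
  symm := by
    constructor
    rintro u v ⟨h, w, hu, hv⟩
    exact ⟨h.symm, w, hv, hu⟩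
  loopless := by
    constructor
    rintro u ⟨h, -⟩
    exact h rfl

/-- A dominating vertex: adjacent to every other vertex. -/
def IsDominating {V : Type*} (Γ : SimpleGraph V) (v : V) : Prop :=
  ∀ u, u ≠ v → Γ.Adj v u

/-- The vertex connectivity: the least size of a set of vertices whose removal
leaves a graph that is not connected. -/
noncomputable def vertexConnectivity {V : Type*} (Γ : SimpleGraph V) : ℕ :=
  sInf {n | ∃ s : Set V, s.ncard = n ∧ ¬ (Γ.induce sᶜ).Connected}

lemma aux_isCyclic_zpowers {G : Type*} [Group G] (w : G) :
    IsCyclic (Subgroup.zpowers w) := by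
  refine ⟨⟨⟨w, Subgroup.mem_zpowers w⟩, ?_⟩⟩
  rintro ⟨x, hx⟩
  obtain ⟨k, hk⟩ := hx
  exact ⟨k, Subtype.ext (by simpa using hk)⟩

lemma aux_mem_zpowers_of_orderOf_eq {H : Type*} [Group H] [Finite H] [IsCyclic H]
    {p : ℕ} (hp : p.Prime) {a b : H} (ha : orderOf a = p) (hb : orderOf b = p) :
    a ∈ Subgroup.zpowers b := by
  classical
  haveI : Fintype H := Fintype.ofFinite H
  set S : Finset H := Finset.univ.filter (fun x => x ^ p = 1) with hS
  have hSle : S.card ≤ p := IsCyclic.card_pow_eq_one_le hp.pos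
  set A : Finset H := (Subgroup.zpowers b : Set H).toFinset with hA
  have hAS : A ⊆ S := by
    intro x hx
    rw [hA, Set.mem_toFinset] at hx
    obtain ⟨k, hk⟩ := hx
    rw [hS, Finset.mem_filter]
    refine ⟨Finset.mem_univ _, ?_⟩
    rw [← hk, ← zpow_natCast, ← zpow_mul, mul_comm, zpow_mul, zpow_natCast,
      ← hb, pow_orderOf_eq_one, one_zpow]
  have hAcard : A.card = p := by
    rw [hA, Set.toFinset_card]
    rw [show (Fintype.card (Subgroup.zpowers b : Set H)) = Fintype.card (Subgroup.zpowers b) from Fintype.card_congr (Equiv.refl _), Fintype.card_zpowers, hb]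
  have hEq : A = S := Finset.eq_of_subset_of_card_le hAS (hSle.trans_eq hAcard.symm)
  have haS : a ∈ S := by
    rw [hS, Finset.mem_filter]
    exact ⟨Finset.mem_univ _, by rw [← ha, pow_orderOf_eq_one]⟩
  rw [← hEq, hA, Set.mem_toFinset] at haS
  exact haS

theorem stmt_19 {G : Type*} [Group G] [Finite G] (v : G) (hv : v ≠ 1)
    (hdom : IsDominating (enhancedPowerGraph G) v)
    (p : ℕ) (hp : p.Prime) (hpv : p ∣ orderOf v) :
    ∀ x : G, orderOf x = p → x ∈ Subgroup.zpowers (v ^ (orderOf v / p)) := by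
  intro x hx
  have hov : orderOf v ≠ 0 := (orderOf_pos v).ne'
  have hoy : orderOf (v ^ (orderOf v / p)) = p := orderOf_pow_orderOf_div hov hpv
  by_cases hxv : x = v
  · subst hxv
    have hop : orderOf x = p := hx
    have h1 : orderOf x / p = 1 := by rw [hop, Nat.div_self hp.pos]
    rw [h1, pow_one]
    exact Subgroup.mem_zpowers x
  · obtain ⟨-, w, hvw, hxw⟩ := hdom x hxv
    have hyw : v ^ (orderOf v / p) ∈ Subgroup.zpowers w :=
      Subgroup.pow_mem _ hvw _
    haveI := aux_isCyclic_zpowers w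
    set x' : Subgroup.zpowers w := ⟨x, hxw⟩ with hx'
    set y' : Subgroup.zpowers w := ⟨v ^ (orderOf v / p), hyw⟩ with hy'
    have hox' : orderOf x' = p := by
      rw [← hx]; exact Subgroup.orderOf_mk x hxw
    have hoy' : orderOf y' = p := by
      rw [← hoy]; exact Subgroup.orderOf_mk _ hyw
    obtain ⟨k, hk⟩ := aux_mem_zpowers_of_orderOf_eq hp hox' hoy'
    refine ⟨k, ?_⟩
    have := congrArg (Subtype.val) hk
    simpa using this
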